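/- For all natural numbers L, N, and n, the two sums ∑_i 2^{L-i} · C(L,i) · C(N, n-i) and ∑_k C(L,k) · C(N+k, n) are equal. -/

import Mathlib

/-- The binomial coefficient `C(a,b)` for a natural number `a` and an integer `b`,
taken to be `0` when `b < 0` (and automatically `0` when `b > a`). -/
def ichoose (a : ℕ) (b : ℤ) : ℕ :=
  if 0 ≤ b then a.choose b.toNat else 0

lemma sum_choose_mul_choose (L i : ℕ) :
    ∑ k ∈ Finset.range (L + 1), Nat.choose L k * Nat.choose k i
      = Nat.choose L i * 2 ^ (L - i) := by
  by_cases hiL : i ≤ L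
  · rw [Finset.range_eq_Ico, ← Finset.sum_Ico_consecutive _ (Nat.zero_le i) (by omega),
      Finset.sum_Ico_eq_sum_range, Finset.sum_Ico_eq_sum_range]
    simp only [Nat.sub_zero, Nat.zero_add]
    have h1 : ∀ k ∈ Finset.range i, Nat.choose L k * Nat.choose k i = 0 := by
      intro k hk
      simp only [Finset.mem_range] at hk
      rw [Nat.choose_eq_zero_of_lt (show k < i by omega)]
      ring
    rw [Finset.sum_congr rfl h1, Finset.sum_const, smul_zero, zero_add]
    have h2 : ∀ j ∈ Finset.range (L + 1 - i),
        Nat.choose L (i + j) * Nat.choose (i + j) i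
          = Nat.choose L i * Nat.choose (L - i) j := by
      intro j hj
      simp only [Finset.mem_range] at hj
      rw [Nat.choose_mul (by omega)]
      congr 2
      omega
    rw [Finset.sum_congr rfl h2, ← Finset.mul_sum]
    congr 1
    have : L + 1 - i = (L - i) + 1 := by omega
    rw [this, Nat.sum_range_choose]
  · rw [Nat.choose_eq_zero_of_lt (by omega), zero_mul]
    apply Finset.sum_eq_zero
    intro k hk
    simp only [Finset.mem_range] at hk
    rw [Nat.choose_eq_zero_of_lt (show k < i by omega)]
    ring

/-- For all natural numbers `L`, `N`, `n`:
`∑_i 2^{L-i} C(L,i) C(N, n-i) = ∑_k C(L,k) C(N+k, n)`.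
The sums range over all integers with out-of-range binomial coefficients vanishing;
since `C(L,·)` vanishes outside `[0,L]`, it suffices to sum over `0 ≤ i,k ≤ L`. -/
theorem binomial_sum_identity (L N n : ℕ) :
    (∑ i ∈ Finset.range (L + 1),
        2 ^ (L - i) * Nat.choose L i * ichoose N ((n : ℤ) - (i : ℤ)))
      = ∑ k ∈ Finset.range (L + 1), Nat.choose L k * Nat.choose (N + k) n := by
  -- rewrite RHS via Vandermonde
  have rhs : ∑ k ∈ Finset.range (L + 1), Nat.choose L k * Nat.choose (N + k) n
      = ∑ i ∈ Finset.range (n + 1),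
          Nat.choose N (n - i) * (Nat.choose L i * 2 ^ (L - i)) := by
    calc ∑ k ∈ Finset.range (L + 1), Nat.choose L k * Nat.choose (N + k) n
        = ∑ k ∈ Finset.range (L + 1), ∑ i ∈ Finset.range (n + 1),
            Nat.choose L k * (Nat.choose N (n - i) * Nat.choose k i) := by
          refine Finset.sum_congr rfl fun k _ => ?_
          rw [Nat.add_choose_eq, Finset.Nat.sum_antidiagonal_eq_sum_range_succ
            (fun a b => Nat.choose N a * Nat.choose k b), ← Finset.sum_range_reflect,
            Finset.mul_sum]
          refine Finset.sum_congr rfl fun i hi => ?_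
          simp only [Finset.mem_range] at hi
          have ha : n + 1 - 1 - i = n - i := by omega
          have hb : n - (n + 1 - 1 - i) = i := by omega
          rw [hb, ha]
      _ = ∑ i ∈ Finset.range (n + 1), Nat.choose N (n - i)
            * ∑ k ∈ Finset.range (L + 1), Nat.choose L k * Nat.choose k i := by
          rw [Finset.sum_comm]
          refine Finset.sum_congr rfl fun i _ => ?_
          rw [Finset.mul_sum]
          exact Finset.sum_congr rfl fun k _ => by ring
      _ = _ := by
          refine Finset.sum_congr rfl fun i _ => ?_
          rw [sum_choose_mul_choose]
  rw [rhs]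
  -- define F
  set F : ℕ → ℕ := fun i =>
    2 ^ (L - i) * Nat.choose L i * (if i ≤ n then Nat.choose N (n - i) else 0) with hF
  have lhsF : ∑ i ∈ Finset.range (L + 1),
      2 ^ (L - i) * Nat.choose L i * ichoose N ((n : ℤ) - (i : ℤ))
      = ∑ i ∈ Finset.range (L + 1), F i := by
    refine Finset.sum_congr rfl fun i _ => ?_
    simp only [hF, ichoose]
    by_cases h : i ≤ n
    · rw [if_pos (by omega : (0:ℤ) ≤ (n:ℤ) - (i:ℤ)), if_pos h]
      congr 2
      omega
    · rw [if_neg (by omega : ¬ (0:ℤ) ≤ (n:ℤ) - (i:ℤ)), if_neg h]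
  rw [lhsF]
  have e1 : ∑ i ∈ Finset.range (L + 1), F i = ∑ i ∈ Finset.range (L + n + 1), F i := by
    apply Finset.sum_subset
    · intro x hx; simp only [Finset.mem_range] at *; omega
    · intro x _ hx
      simp only [Finset.mem_range, not_lt] at hx
      simp only [hF, Nat.choose_eq_zero_of_lt (by omega : L < x)]
      ring
  have e2 : ∑ i ∈ Finset.range (n + 1), F i = ∑ i ∈ Finset.range (L + n + 1), F i := by
    apply Finset.sum_subset
    · intro x hx; simp only [Finset.mem_range] at *; omega
    · intro x _ hx
      simp only [Finset.mem_range, not_lt] at hx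
      simp only [hF, if_neg (by omega : ¬ x ≤ n)]
      ring
  rw [e1, ← e2]
  refine Finset.sum_congr rfl fun i hi => ?_
  simp only [Finset.mem_range] at hi
  simp only [hF, if_pos (by omega : i ≤ n)]
  ring
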